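/- Let p be an odd prime, F a field containing a primitive p-th root of unity, a ∈ F^× not a p-th power in F, E = F(α) where α^p = a, and G = Gal(E/F), a cyclic group of order p. Then the F_p[G]-module E^×/E^{×p} is NOT a free F_p[G]-module. (In the paper's notation: for p > 2, H^1(E) is never a free F_p[Gal(E/F)]-module.) -/

import Mathlib

noncomputable section

/-- The subgroup of `p`-th powers in the multiplicative group of units of a field `E`. -/
def pthPowers (E : Type*) [Field E] (p : ℕ) : Subgroup Eˣ :=
  (powMonoidHom p : Eˣ →* Eˣ).range

/-- The group `E^× / E^{×p}`, written additively. -/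
abbrev KModP (E : Type*) [Field E] (p : ℕ) : Type _ :=
  Additive (Eˣ ⧸ pthPowers E p)

instance kModPModule (E : Type*) [Field E] (p : ℕ) : Module (ZMod p) (KModP E p) :=
  AddCommGroup.zmodModule (n := p) (G := KModP E p) (by
    intro x
    induction x using Additive.rec with
    | _ q =>
      induction q using QuotientGroup.induction_on with
      | _ u =>
        rw [← ofMul_pow, ← QuotientGroup.mk_pow, show ((QuotientGroup.mk (u ^ p) :
          Eˣ ⧸ pthPowers E p)) = 1 from (QuotientGroup.eq_one_iff _).2 ⟨u, rfl⟩]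
        rfl)

/-- The action of the Galois group on `E^×/E^{×p}` as a representation over `ZMod p`. -/
def galRep (F E : Type*) [Field F] [Field E] [Algebra F E] (p : ℕ) :
    Representation (ZMod p) (E ≃ₐ[F] E) (KModP E p) where
  toFun σ :=
    AddMonoidHom.toZModLinearMap p <| MonoidHom.toAdditive <|
      QuotientGroup.map (pthPowers E p) (pthPowers E p)
        (Units.map (σ : E →* E))
        (by rintro x ⟨u, rfl⟩
            exact ⟨Units.map (σ : E →* E) u, by simp [powMonoidHom, map_pow]⟩)
  map_one' := by
    ext x
    induction x using Additive.rec with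
    | _ q =>
      induction q using QuotientGroup.induction_on with
      | _ u => rfl
  map_mul' := fun σ τ => by
    ext x
    induction x using Additive.rec with
    | _ q =>
      induction q using QuotientGroup.induction_on with
      | _ u => rfl


open MonoidAlgebra Finset
open scoped IntermediateField

lemma kerN_ring {p : ℕ} [Fact p.Prime] {G : Type*} [Group G] [Fintype G]
    (hG : Fintype.card G = p) {σ : G} (hσ : σ ≠ 1)
    {r : MonoidAlgebra (ZMod p) G}
    (hr : (∑ g : G, MonoidAlgebra.single g (1 : ZMod p)) * r = 0) :
    ∃ d, r = (MonoidAlgebra.single σ (1 : ZMod p) - 1) * d := by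
  haveI : NeZero p := ⟨(Fact.out : p.Prime).ne_zero⟩
  set t : MonoidAlgebra (ZMod p) G := MonoidAlgebra.single σ (1 : ZMod p) - 1 with ht
  set N : MonoidAlgebra (ZMod p) G := ∑ g : G, MonoidAlgebra.single g (1 : ZMod p) with hN
  -- every group element is a power of σ with exponent < p
  have hpow : ∀ g : G, ∃ k : ℕ, k < p ∧ σ ^ k = g := by
    intro g
    obtain ⟨k, hk⟩ := mem_powers_of_prime_card (g' := g) (by simpa using hG) hσ
    refine ⟨k % p, Nat.mod_lt _ (Fact.out : p.Prime).pos, ?_⟩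
    have hcard : σ ^ p = 1 := by rw [← hG]; exact pow_card_eq_one
    have hg : σ ^ k = g := hk
    calc σ ^ (k % p) = σ ^ (p * (k / p) + k % p) := by
          rw [pow_add, pow_mul, hcard, one_pow, one_mul]
      _ = g := by rw [Nat.div_add_mod]; exact hg
  -- span of powers of t
  have hspan : ∃ c : Fin p → ZMod p, ∑ j : Fin p, c j • t ^ (j : ℕ) = r := by
    rw [← Submodule.mem_span_range_iff_exists_fun]
    have hsingle : ∀ g : G, MonoidAlgebra.single g (1 : ZMod p) ∈
        Submodule.span (ZMod p) (Set.range fun j : Fin p => t ^ (j : ℕ)) := by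
      intro g
      obtain ⟨k, hk, rfl⟩ := hpow g
      have : MonoidAlgebra.single (σ ^ k) (1 : ZMod p) = (t + 1) ^ k := by
        rw [ht, sub_add_cancel, MonoidAlgebra.single_pow, one_pow]
      rw [this, (Commute.one_right t).add_pow]
      apply Submodule.sum_mem
      intro i hi
      rw [Finset.mem_range] at hi
      have : t ^ i * 1 ^ (k - i) * (k.choose i : MonoidAlgebra (ZMod p) G) = (k.choose i : ZMod p) • t ^ i := by
        rw [one_pow, mul_one, Nat.cast_smul_eq_nsmul, nsmul_eq_mul,
          (Nat.cast_commute (k.choose i) (t ^ i)).eq]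
      rw [this]
      exact Submodule.smul_mem _ _ (Submodule.subset_span ⟨⟨i, lt_of_lt_of_le hi hk⟩, rfl⟩)
    have : r = ∑ g ∈ r.coeff.support, (r.coeff g) • MonoidAlgebra.single g (1 : ZMod p) := by
      apply MonoidAlgebra.coeff_injective
      rw [MonoidAlgebra.coeff_sum]
      conv_lhs => rw [← Finsupp.sum_single r.coeff]
      rw [Finsupp.sum]
      congr 1
      funext g
      rw [MonoidAlgebra.coeff_smul, MonoidAlgebra.coeff_single, Finsupp.smul_single, smul_eq_mul, mul_one]
    rw [this]
    exact Submodule.sum_mem _ fun g _ => Submodule.smul_mem _ _ (hsingle g)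
  -- N * t = 0
  have hNσ : N * MonoidAlgebra.single σ (1 : ZMod p) = N := by
    rw [hN, Finset.sum_mul]
    have : ∀ g : G, MonoidAlgebra.single g (1 : ZMod p) * MonoidAlgebra.single σ 1
        = MonoidAlgebra.single (g * σ) 1 := by
      intro g; rw [MonoidAlgebra.single_mul_single, mul_one]
    simp only [this]
    exact Equiv.sum_comp (Equiv.mulRight σ) (fun g => MonoidAlgebra.single g (1 : ZMod p))
  have hNt : N * t = 0 := by rw [ht, mul_sub, mul_one, hNσ, sub_self]
  have hNtj : ∀ j : ℕ, j ≠ 0 → N * t ^ j = 0 := by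
    intro j hj
    obtain ⟨j', rfl⟩ := Nat.exists_eq_succ_of_ne_zero hj
    rw [pow_succ', ← mul_assoc, hNt, zero_mul]
  obtain ⟨c, hc⟩ := hspan
  -- N * r = c 0 • N
  have hNr : N * r = c 0 • N := by
    rw [← hc, Finset.mul_sum]
    rw [Finset.sum_eq_single 0]
    · rw [mul_smul_comm, Fin.val_zero, pow_zero, mul_one]
    · intro j _ hj
      rw [mul_smul_comm, hNtj _ (fun h => hj (Fin.ext (by simpa using congrArg Fin.val (Fin.ext h : (j : Fin p) = ⟨0, (Fact.out : p.Prime).pos⟩)))), smul_zero]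
    · intro h; exact absurd (Finset.mem_univ _) h
  have hc0 : c 0 = 0 := by
    have h1 : (N : MonoidAlgebra (ZMod p) G).coeff 1 = 1 := by
      rw [hN, MonoidAlgebra.coeff_sum, Finsupp.finset_sum_apply]
      rw [Finset.sum_eq_single (1 : G)]
      · simp [MonoidAlgebra.coeff_single]
      · intro g _ hg; simp [MonoidAlgebra.coeff_single, Finsupp.single_apply, hg]
      · intro h; exact absurd (Finset.mem_univ _) h
    have h2 : (c 0 • N).coeff 1 = (0 : MonoidAlgebra (ZMod p) G).coeff 1 := by
      rw [← hNr.symm.trans hr]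
    rw [MonoidAlgebra.coeff_smul_apply, h1, smul_eq_mul, mul_one] at h2
    simpa using h2
  refine ⟨∑ j : Fin p, c j • t ^ ((j : ℕ) - 1), ?_⟩
  rw [Finset.mul_sum, ← hc]
  apply Finset.sum_congr rfl
  intro j _
  by_cases hj : (j : ℕ) = 0
  · have : j = 0 := Fin.ext (by simpa using hj)
    rw [this, hc0, zero_smul, zero_smul, mul_zero]
  · rw [mul_smul_comm, ← pow_succ']
    congr 2
    omega

lemma kerN_free {p : ℕ} [Fact p.Prime] {G : Type*} [Group G] [Fintype G]
    (hG : Fintype.card G = p) {σ : G} (hσ : σ ≠ 1)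
    {M : Type*} [AddCommGroup M] [Module (MonoidAlgebra (ZMod p) G) M]
    [Module.Free (MonoidAlgebra (ZMod p) G) M]
    {m : M} (hm : (∑ g : G, MonoidAlgebra.single g (1 : ZMod p)) • m = 0) :
    ∃ x : M, m = (MonoidAlgebra.single σ (1 : ZMod p) - 1) • x := by
  set R := MonoidAlgebra (ZMod p) G
  set N : R := ∑ g : G, MonoidAlgebra.single g (1 : ZMod p) with hN
  set t : R := MonoidAlgebra.single σ (1 : ZMod p) - 1 with ht
  let b := Module.Free.chooseBasis R M
  have hrepr : ∀ i, N * (b.repr m i) = 0 := by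
    intro i
    have : b.repr (N • m) = N • b.repr m := map_smul _ _ _
    rw [hm, map_zero] at this
    have := congrArg (fun f => f i) this.symm
    simpa [Finsupp.smul_apply, smul_eq_mul] using this
  choose d hd using fun i => kerN_ring hG hσ (hrepr i)
  refine ⟨∑ i ∈ (b.repr m).support, d i • b i, ?_⟩
  rw [Finset.smul_sum]
  have : ∀ i ∈ (b.repr m).support, t • d i • b i = b.repr m i • b i := by
    intro i _
    rw [smul_smul, ← hd i]
  rw [Finset.sum_congr rfl this]
  conv_lhs => rw [← b.linearCombination_repr (x := m)]
  rw [Finsupp.linearCombination_apply, Finsupp.sum]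

/-- Let `p` be an odd prime, `F` a field containing a primitive `p`-th root
of unity, `a ∈ F^×` not a `p`-th power in `F`, `E = F(α)` where `α^p = a`, and
`G = Gal(E/F)`.  Then the `F_p[G]`-module `E^×/E^{×p}` is NOT a free `F_p[G]`-module. -/
theorem h1_not_free_of_odd_prime
    {p : ℕ} (hp : p.Prime) (hodd : Odd p)
    {F E : Type*} [Field F] [Field E] [Algebra F E]
    (ζ : F) (hζ : IsPrimitiveRoot ζ p)
    (a : F) (ha : a ≠ 0) (hnp : ∀ f : F, f ^ p ≠ a)
    (α : E) (hα : α ^ p = algebraMap F E a)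
    (hgenα : Algebra.adjoin F {α} = ⊤) :
    ¬ Module.Free (MonoidAlgebra (ZMod p) (E ≃ₐ[F] E)) (galRep F E p).asModule := by
  intro hfree
  haveI : Fact p.Prime := ⟨hp⟩
  have hp0 : 0 < p := hp.pos
  have H : Irreducible (Polynomial.X ^ p - Polynomial.C a) :=
    X_pow_sub_C_irreducible_of_prime hp hnp
  have haev : (Polynomial.aeval α) (Polynomial.X ^ p - Polynomial.C a) = 0 := by
    simp [hα]
  have hmon : (Polynomial.X ^ p - Polynomial.C a).Monic :=
    Polynomial.monic_X_pow_sub_C a hp.ne_zero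
  have hint : IsIntegral F α := ⟨Polynomial.X ^ p - Polynomial.C a, hmon, haev⟩
  have hmin : minpoly F α = Polynomial.X ^ p - Polynomial.C a :=
    (minpoly.eq_of_irreducible_of_monic H haev hmon).symm
  have hItop : F⟮α⟯ = (⊤ : IntermediateField F E) := by
    apply IntermediateField.toSubalgebra_injective
    rw [IntermediateField.adjoin_simple_toSubalgebra_of_isAlgebraic hint.isAlgebraic, hgenα,
      IntermediateField.top_toSubalgebra]
  haveI : FiniteDimensional F E := by
    haveI := IntermediateField.adjoin.finiteDimensional hint
    rw [hItop] at this
    exact Module.Finite.equiv (IntermediateField.topEquiv (F := F) (E := E)).toLinearEquiv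
  have hfr : Module.finrank F E = p := by
    have h1 := IntermediateField.adjoin.finrank hint
    rw [hItop, hmin, Polynomial.natDegree_X_pow_sub_C, IntermediateField.finrank_top'] at h1
    exact h1
  have hζ' : (primitiveRoots p F).Nonempty := ⟨ζ, (mem_primitiveRoots hp0).2 hζ⟩
  have hζfr : (primitiveRoots (Module.finrank F E) F).Nonempty := by rwa [hfr]
  haveI hsplit : Polynomial.IsSplittingField F E (Polynomial.X ^ p - Polynomial.C a) := by
    have := isSplittingField_X_pow_sub_C_of_root_adjoin_eq_top hζfr
      (by rw [hfr]; exact hα) hItop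
    rwa [hfr] at this
  haveI : IsGalois F E := isGalois_of_isSplittingField_X_pow_sub_C hζ' H E
  have hcard : Fintype.card (E ≃ₐ[F] E) = p := by
    rw [← IsGalois.card_aut_eq_finrank, Nat.card_eq_fintype_card] at hfr; exact hfr
  obtain ⟨σ, hσ⟩ := Fintype.exists_ne_of_one_lt_card (α := E ≃ₐ[F] E) (by rw [hcard]; exact hp.one_lt) 1
  -- norm of α is a
  set pb : PowerBasis F E := (IntermediateField.adjoin.powerBasis hint).map
    ((IntermediateField.equivOfEq hItop).trans IntermediateField.topEquiv) with hpb
  have hgen : pb.gen = α := by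
    simp [hpb, PowerBasis.map_gen, IntermediateField.adjoin.powerBasis_gen]
  have hnormα : Algebra.norm F α = a := by
    have h0 := Algebra.PowerBasis.norm_gen_eq_coeff_zero_minpoly pb
    have hdim : pb.dim = p := by rw [← pb.finrank, hfr]
    rw [hgen, hmin, hdim] at h0
    rw [h0, Polynomial.coeff_sub, Polynomial.coeff_X_pow, if_neg (show ¬(0:ℕ) = p from fun h => hp.ne_zero h.symm), Polynomial.coeff_C_zero, hodd.neg_one_pow]
    ring
  have hα0 : α ≠ 0 := by
    intro h
    apply ha
    have h2 : algebraMap F E a = 0 := by rw [← hα, h, zero_pow hp.ne_zero]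
    have := (algebraMap F E).injective (h2.trans (map_zero (algebraMap F E)).symm)
    exact this
  set αu : Eˣ := Units.mk0 α hα0 with hαu
  set ρ := galRep F E p with hρ
  set e := ρ.asModuleEquiv with he
  set N : MonoidAlgebra (ZMod p) (E ≃ₐ[F] E) :=
    ∑ g : E ≃ₐ[F] E, MonoidAlgebra.single g (1 : ZMod p) with hN
  have hact : ∀ (g : E ≃ₐ[F] E) (x : ρ.asModule),
      e ((MonoidAlgebra.single g (1 : ZMod p)) • x) = ρ g (e x) := by
    intro g x
    rw [Representation.asModuleEquiv_map_smul, Representation.asAlgebraHom_single_one]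
  have hρmk : ∀ (g : E ≃ₐ[F] E) (u : Eˣ),
      ρ g (Additive.ofMul (QuotientGroup.mk u : Eˣ ⧸ pthPowers E p))
      = Additive.ofMul (QuotientGroup.mk (Units.map (g : E →* E) u) : Eˣ ⧸ pthPowers E p) :=
    fun g u => rfl
  set m : ρ.asModule := e.symm (Additive.ofMul (QuotientGroup.mk αu : Eˣ ⧸ pthPowers E p))
    with hm
  have hNm : N • m = 0 := by
    apply e.injective
    rw [map_zero, hN, Finset.sum_smul, map_sum]
    have h1 : ∀ g : E ≃ₐ[F] E, e ((MonoidAlgebra.single g (1 : ZMod p)) • m)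
        = Additive.ofMul (QuotientGroup.mk (Units.map ((g : E ≃ₐ[F] E) : E →* E) αu) :
            Eˣ ⧸ pthPowers E p) := by
      intro g
      rw [hact, hm, e.apply_symm_apply, hρmk]
    rw [Finset.sum_congr rfl (fun g _ => h1 g), ← ofMul_prod]
    have hprod : (∏ g : E ≃ₐ[F] E, Units.map ((g : E ≃ₐ[F] E) : E →* E) αu) = αu ^ p := by
      ext
      push_cast
      simp only [Units.coe_map, MonoidHom.coe_coe, hαu, Units.val_mk0]
      rw [← Algebra.norm_eq_prod_automorphisms, hnormα, ← hα]
    rw [← QuotientGroup.mk_prod, hprod,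
      show ((QuotientGroup.mk (αu ^ p)) : Eˣ ⧸ pthPowers E p) = 1 from
        (QuotientGroup.eq_one_iff _).2 ⟨αu, rfl⟩, ofMul_one]
  obtain ⟨x, hx⟩ := kerN_free hcard hσ hNm
  obtain ⟨u, hu⟩ := QuotientGroup.mk_surjective (Additive.toMul (e x))
  have hex : e x = Additive.ofMul (QuotientGroup.mk u : Eˣ ⧸ pthPowers E p) := by
    rw [hu, ofMul_toMul]
  have hem : e m = ρ σ (e x) - e x := by
    rw [hx, sub_smul, one_smul, map_sub, hact]
  have key : (QuotientGroup.mk αu : Eˣ ⧸ pthPowers E p)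
      = QuotientGroup.mk (Units.map ((σ : E ≃ₐ[F] E) : E →* E) u / u) := by
    rw [hm, e.apply_symm_apply] at hem
    rw [hex, hρmk, ← ofMul_div] at hem
    have := Additive.ofMul.injective hem
    rwa [← QuotientGroup.mk_div] at this
  rw [QuotientGroup.eq] at key
  obtain ⟨y, hy⟩ := key
  set Nu : Eˣ →* Fˣ := Units.map (Algebra.norm F : E →* F) with hNu
  have hNuσ : Nu (Units.map ((σ : E ≃ₐ[F] E) : E →* E) u) = Nu u := by
    ext
    simp only [hNu, Units.coe_map, MonoidHom.coe_coe]
    exact Algebra.norm_eq_of_algEquiv σ _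
  have happ := congrArg Nu hy
  rw [powMonoidHom_apply, map_pow, map_mul, map_div, hNuσ, map_inv, div_self', mul_one] at happ
  -- happ : Nu y ^ p = (Nu αu)⁻¹
  have hval : a = (((Nu y)⁻¹ : Fˣ) : F) ^ p := by
    have h2 : Nu αu = ((Nu y)⁻¹) ^ p := by
      rw [inv_pow, happ, inv_inv]
    have h3 : ((Nu αu : Fˣ) : F) = a := by
      simp only [hNu, Units.coe_map, MonoidHom.coe_coe, hαu, Units.val_mk0]
      exact hnormα
    rw [← h3, h2, Units.val_pow_eq_pow_val]
  exact hnp _ hval.symm
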